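/- Let (m_1,r_1),…,(m_n,r_n) with m_i ∈ ℝ², r_i > 0, and let H_v : S¹ → ℕ be the sum of the signal functions. Then H_v is properly upper semicontinuous if and only if for all indices 1 ≤ i ≤ j ≤ n, no point x ∈ ∂h_{(m_i,r_i)} ∩ ∂h_{(m_j,r_j)} is an isolated point of the set {y ∈ S¹ : ‖y − m_i‖ ≤ r_i and ‖y − m_j‖ ≤ r_j}. -/

import Mathlib

noncomputable section

open scoped BigOperators
open Classical

/-- The unit circle `S¹` in the plane (modeled as `ℂ ≅ ℝ²` with the Euclidean norm). -/
def S1 : Set ℂ := {x : ℂ | ‖x‖ = 1}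

/-- The signal function `h_{(m,r)}`: indicator of the closed disk of center `m`, radius `r`. -/
def signal (m : ℂ) (r : ℝ) (x : ℂ) : ℕ := if ‖x - m‖ ≤ r then 1 else 0

/-- The boundary trace `∂h_{(m,r)} = {x ∈ S¹ : ‖x − m‖ = r}`. -/
def bTrace (m : ℂ) (r : ℝ) : Set ℂ := {x : ℂ | ‖x‖ = 1 ∧ ‖x - m‖ = r}

/-- The sum `H_v` of the signal functions of the disk data `v = ((m_i, r_i))_{i<n}`. -/
def Hsum {n : ℕ} (v : Fin n → ℂ × ℝ) (x : ℂ) : ℕ := ∑ i, signal (v i).1 (v i).2 x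

/-- Rotation of the plane by angle `t` about the origin. -/
def rot (t : ℝ) (x : ℂ) : ℂ := Complex.exp (t * Complex.I) * x

/-- `H(x⁺) = a`: `H` equals `a` just after `x` (counterclockwise). -/
def rightVal (H : ℂ → ℕ) (x : ℂ) (a : ℕ) : Prop :=
  ∃ δ > (0 : ℝ), ∀ t : ℝ, 0 < t → t < δ → H (rot t x) = a

/-- `H(x⁻) = b`: `H` equals `b` just before `x`. -/
def leftVal (H : ℂ → ℕ) (x : ℂ) (b : ℕ) : Prop :=
  ∃ δ > (0 : ℝ), ∀ t : ℝ, -δ < t → t < 0 → H (rot t x) = b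

/-- `H` is properly upper semicontinuous on `S¹`: at each point both one-sided limits
exist and the value equals their maximum. -/
def ProperlyUSC (H : ℂ → ℕ) : Prop :=
  ∀ x ∈ S1, ∃ a b : ℕ, rightVal H x a ∧ leftVal H x b ∧ H x = max a b

/-- `H* = max_{S¹} H`. -/
def maxOnS1 (H : ℂ → ℕ) : ℕ := sSup (H '' S1)

/-- `H_* = min_{S¹} H`. -/
def minOnS1 (H : ℂ → ℕ) : ℕ := sInf (H '' S1)

/-- The superlevel set `{x ∈ S¹ : H(x) ≥ k}`. -/
def superlevel (H : ℂ → ℕ) (k : ℕ) : Set ℂ := {x ∈ S1 | k ≤ H x}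

/-- Number of connected components of a subset of the plane. -/
def numCC (A : Set ℂ) : ℕ := Nat.card (ConnectedComponents ↥A)

/-- `τ(H) = Σ_{k=H_*+1}^{H*} (c_k(H) − 1)`. -/
def tau (H : ℂ → ℕ) : ℕ :=
  ∑ k ∈ Finset.Icc (minOnS1 H + 1) (maxOnS1 H), (numCC (superlevel H k) - 1)

/-- `ρ` for the degrees-of-freedom count. -/
def rho (m : ℂ) (r : ℝ) : ℕ :=
  if bTrace m r = ∅ then 3
  else if (bTrace m r).ncard = 1 ∨ (bTrace m r).ncard = 2 then 1
  else 0

/-- `N`-degrees of freedom of a decomposition with `n ≤ N` signals. -/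
def DoF (N : ℕ) {n : ℕ} (v : Fin n → ℂ × ℝ) : ℕ :=
  3 * (N - n) + ∑ i, rho (v i).1 (v i).2


lemma rot_zero (x : ℂ) : rot 0 x = x := by simp [rot]

lemma norm_rot (t : ℝ) (x : ℂ) : ‖rot t x‖ = ‖x‖ := by
  simp [rot, map_mul, Complex.norm_exp_ofReal_mul_I]

lemma continuous_rot (x : ℂ) : Continuous (fun t : ℝ => rot t x) := by
  unfold rot
  fun_prop

lemma analyticAt_F (m x : ℂ) (r : ℝ) :
    AnalyticAt ℝ (fun t : ℝ => ‖rot t x - m‖ ^ 2 - r ^ 2) 0 := by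
  have hg : AnalyticAt ℝ (fun t : ℝ => rot t x - m) 0 := by
    have h1 : AnalyticAt ℝ (fun t : ℝ => (t : ℂ) * Complex.I) 0 := by
      exact (Complex.ofRealCLM.analyticAt 0).mul analyticAt_const
    have h2 : AnalyticAt ℝ (fun t : ℝ => Complex.exp ((t : ℂ) * Complex.I)) 0 := by
      have h3 := (analyticAt_cexp (z := ((0:ℝ) : ℂ) * Complex.I)).restrictScalars (𝕜 := ℝ)
      have h4 : AnalyticAt ℝ (Complex.exp ∘ fun t : ℝ => (t : ℂ) * Complex.I) 0 :=
        AnalyticAt.comp h3 h1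
      exact h4
    exact (h2.mul analyticAt_const).sub analyticAt_const
  have hconj : AnalyticAt ℝ (fun t : ℝ => (starRingEnd ℂ) (rot t x - m)) 0 := by
    exact (Complex.conjCLE.toContinuousLinearMap.analyticAt _).comp hg
  have hre : AnalyticAt ℝ (fun t : ℝ =>
      Complex.reCLM ((rot t x - m) * (starRingEnd ℂ) (rot t x - m))) 0 :=
    (Complex.reCLM.analyticAt _).comp (hg.mul hconj)
  have : (fun t : ℝ => ‖rot t x - m‖ ^ 2 - r ^ 2)
      = fun t : ℝ => Complex.reCLM ((rot t x - m) * (starRingEnd ℂ) (rot t x - m)) - r ^ 2 := by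
    funext t
    simp [Complex.mul_conj, Complex.sq_norm, Complex.normSq_apply]; ring
  rw [this]
  exact hre.sub analyticAt_const

lemma signal_iff_sq {m : ℂ} {r : ℝ} (hr : 0 < r) (y : ℂ) :
    ‖y - m‖ ≤ r ↔ ‖y - m‖ ^ 2 - r ^ 2 ≤ 0 := by
  rw [sub_nonpos, pow_le_pow_iff_left₀ (norm_nonneg _) hr.le two_ne_zero]

lemma sided (m x : ℂ) (r : ℝ) (hr : 0 < r) :
    ∃ δ > (0:ℝ), ∃ ep em : ℕ,
      (∀ t : ℝ, 0 < t → t < δ → signal m r (rot t x) = ep) ∧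
      (∀ t : ℝ, -δ < t → t < 0 → signal m r (rot t x) = em) := by
  set F : ℝ → ℝ := fun t => ‖rot t x - m‖ ^ 2 - r ^ 2 with hF
  have hFc : Continuous F := by
    apply Continuous.sub _ continuous_const
    exact (((continuous_rot x).sub continuous_const).norm).pow 2
  have hsig : ∀ t : ℝ, signal m r (rot t x) = if F t ≤ 0 then 1 else 0 := by
    intro t
    simp only [signal, hF]
    exact if_congr (signal_iff_sq hr _) rfl rfl
  rcases (analyticAt_F m x r).eventually_eq_zero_or_eventually_ne_zero with h | h
  · rw [Metric.eventually_nhds_iff] at h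
    obtain ⟨δ, hδ, hδ'⟩ := h
    refine ⟨δ, hδ, 1, 1, fun t ht ht' => ?_, fun t ht ht' => ?_⟩
    · have habs : |t| < δ := abs_lt.mpr ⟨by linarith, ht'⟩
      rw [hsig, if_pos]
      rw [show F t = 0 from hδ' (by rwa [Real.dist_eq, sub_zero])]
    · have habs : |t| < δ := abs_lt.mpr ⟨ht, by linarith⟩
      rw [hsig, if_pos]
      rw [show F t = 0 from hδ' (by rwa [Real.dist_eq, sub_zero])]
  · have h2 : ∀ᶠ t in nhdsWithin 0 {(0:ℝ)}ᶜ, F t ≠ 0 := h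
    rw [eventually_nhdsWithin_iff, Metric.eventually_nhds_iff] at h2
    obtain ⟨δ, hδ, hδ'⟩ := h2
    have hne : ∀ t : ℝ, t ≠ 0 → |t| < δ → F t ≠ 0 := by
      intro t ht ht'
      exact hδ' (by rwa [Real.dist_eq, sub_zero]) ht
    have same : ∀ t s : ℝ, (0:ℝ) ∉ Set.uIcc t s → |t| < δ → |s| < δ →
        (F t ≤ 0 ↔ F s ≤ 0) := by
      intro t s h0 htδ hsδ
      by_contra hcon
      have hmem : (0:ℝ) ∈ Set.uIcc (F t) (F s) := by
        rcases le_or_gt (F t) 0 with h1 | h1 <;> rcases le_or_gt (F s) 0 with h2 | h2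
        · exact absurd (iff_of_true h1 h2) hcon
        · exact Set.mem_uIcc.mpr (Or.inl ⟨h1, h2.le⟩)
        · exact Set.mem_uIcc.mpr (Or.inr ⟨h2, h1.le⟩)
        · exact absurd (iff_of_false (not_le.mpr h1) (not_le.mpr h2)) hcon
      obtain ⟨u, hu, hu0⟩ := intermediate_value_uIcc (hFc.continuousOn) hmem
      have hu1 : u ≠ 0 := fun h => h0 (h ▸ hu)
      have hu2 : |u| < δ := by
        rcases Set.mem_uIcc.mp hu with ⟨h1', h2'⟩ | ⟨h1', h2'⟩ <;>
          rw [abs_lt] at htδ hsδ ⊢ <;> constructor <;> linarith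
      exact hne u hu1 hu2 hu0
    refine ⟨δ, hδ, signal m r (rot (δ/2) x), signal m r (rot (-(δ/2)) x),
      fun t ht ht' => ?_, fun t ht ht' => ?_⟩
    · rw [hsig, hsig]
      refine if_congr (same t (δ/2) ?_ ?_ ?_) rfl rfl
      · intro hmem; rcases Set.mem_uIcc.mp hmem with ⟨h1, h2⟩ | ⟨h1, h2⟩ <;> linarith
      · rw [abs_lt]; constructor <;> linarith
      · rw [abs_lt]; constructor <;> linarith
    · rw [hsig, hsig]
      refine if_congr (same t (-(δ/2)) ?_ ?_ ?_) rfl rfl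
      · intro hmem; rcases Set.mem_uIcc.mp hmem with ⟨h1, h2⟩ | ⟨h1, h2⟩ <;> linarith
      · rw [abs_lt]; constructor <;> linarith
      · rw [abs_lt]; constructor <;> linarith

lemma signal_le_one (m : ℂ) (r : ℝ) (y : ℂ) : signal m r y ≤ 1 := by
  unfold signal; split <;> omega

lemma exists_small (σ δ δ' : ℝ) (hσ : σ ≠ 0) (hδ : 0 < δ) (hδ' : 0 < δ') :
    ∃ t : ℝ, 0 < t ∧ t < δ ∧ |σ * t| < δ' := by
  have hs : 0 < |σ| := abs_pos.mpr hσ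
  set t0 := min (δ/2) (δ' / (2 * |σ|)) with ht0def
  have ht0 : 0 < t0 := lt_min (by linarith) (by positivity)
  refine ⟨t0, ht0, ?_, ?_⟩
  · exact lt_of_le_of_lt (min_le_left _ _) (by linarith)
  · have h1 : |σ * t0| = |σ| * t0 := by rw [abs_mul, abs_of_pos ht0]
    rw [h1]
    calc |σ| * t0 ≤ |σ| * (δ' / (2 * |σ|)) :=
          mul_le_mul_of_nonneg_left (min_le_right _ _) hs.le
      _ = δ' / 2 := by field_simp
      _ < δ' := by linarith

lemma sided_le {m x : ℂ} {r : ℝ} {σ δ : ℝ} (hσ : σ ≠ 0) (hδ : 0 < δ) {e : ℕ}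
    (h : ∀ t : ℝ, 0 < t → t < δ → signal m r (rot (σ * t) x) = e) : e ≤ signal m r x := by
  by_cases hc : ‖x - m‖ ≤ r
  · have h1 : signal m r x = 1 := by unfold signal; rw [if_pos hc]
    rw [h1, ← h (δ/2) (by linarith) (by linarith)]
    exact signal_le_one _ _ _
  · push_neg at hc
    have hcont : ContinuousAt (fun t : ℝ => ‖rot t x - m‖) 0 :=
      (((continuous_rot x).sub continuous_const).norm).continuousAt
    have hev : ∀ᶠ t in nhds (0:ℝ), r < ‖rot t x - m‖ := by
      have : rot 0 x = x := rot_zero x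
      apply continuousAt_const.eventually_lt hcont
      simpa [this] using hc
    rw [Metric.eventually_nhds_iff] at hev
    obtain ⟨δ', hδ', hev⟩ := hev
    obtain ⟨t, ht1, ht2, ht3⟩ := exists_small σ δ δ' hσ hδ hδ'
    have h0 : signal m r (rot (σ * t) x) = 0 := by
      unfold signal
      rw [if_neg (not_le.mpr (hev (by rwa [Real.dist_eq, sub_zero])))]
    rw [← h t ht1 ht2, h0]
    exact Nat.zero_le _

lemma sided_boundary {m x : ℂ} {r : ℝ} {σ δ : ℝ} (hσ : σ ≠ 0) (hδ : 0 < δ)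
    (h : ∀ t : ℝ, 0 < t → t < δ → signal m r (rot (σ * t) x) = 0)
    (hx : ‖x - m‖ ≤ r) : ‖x - m‖ = r := by
  refine le_antisymm hx ?_
  by_contra hc
  push_neg at hc
  have hcont : ContinuousAt (fun t : ℝ => ‖rot t x - m‖) 0 :=
    (((continuous_rot x).sub continuous_const).norm).continuousAt
  have hev : ∀ᶠ t in nhds (0:ℝ), ‖rot t x - m‖ < r := by
    apply hcont.eventually_lt continuousAt_const
    simpa [rot_zero x] using hc
  rw [Metric.eventually_nhds_iff] at hev
  obtain ⟨δ', hδ', hev⟩ := hev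
  obtain ⟨t, ht1, ht2, ht3⟩ := exists_small σ δ δ' hσ hδ hδ'
  have h1 : signal m r (rot (σ * t) x) = 1 := by
    unfold signal
    rw [if_pos (le_of_lt (hev (by rwa [Real.dist_eq, sub_zero])))]
  rw [h t ht1 ht2] at h1
  exact one_ne_zero h1.symm

lemma rightVal_unique {H : ℂ → ℕ} {x : ℂ} {a b : ℕ}
    (ha : rightVal H x a) (hb : rightVal H x b) : a = b := by
  obtain ⟨δ1, hδ1, h1⟩ := ha
  obtain ⟨δ2, hδ2, h2⟩ := hb
  have ht : 0 < min δ1 δ2 / 2 := by positivity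
  rw [← h1 _ ht (lt_of_lt_of_le (by linarith [min_le_left δ1 δ2]) (le_refl _)),
    h2 _ ht (by
      have := min_le_right δ1 δ2
      linarith)]

lemma leftVal_unique {H : ℂ → ℕ} {x : ℂ} {a b : ℕ}
    (ha : leftVal H x a) (hb : leftVal H x b) : a = b := by
  obtain ⟨δ1, hδ1, h1⟩ := ha
  obtain ⟨δ2, hδ2, h2⟩ := hb
  have ht1 : -δ1 < -(min δ1 δ2 / 2) := by
    have := min_le_left δ1 δ2; linarith
  have ht2 : -δ2 < -(min δ1 δ2 / 2) := by
    have := min_le_right δ1 δ2; linarith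
  have htn : -(min δ1 δ2 / 2) < 0 := by
    have : 0 < min δ1 δ2 := lt_min hδ1 hδ2
    linarith
  rw [← h1 _ ht1 htn, h2 _ ht2 htn]

lemma hsum_sides {n : ℕ} (v : Fin n → ℂ × ℝ) (hr : ∀ i, 0 < (v i).2) (x : ℂ) :
    ∃ δ > (0:ℝ), ∃ ep em : Fin n → ℕ,
      (∀ i, ∀ t : ℝ, 0 < t → t < δ → signal (v i).1 (v i).2 (rot t x) = ep i) ∧
      (∀ i, ∀ t : ℝ, -δ < t → t < 0 → signal (v i).1 (v i).2 (rot t x) = em i) := by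
  have h := fun i => sided (v i).1 x (v i).2 (hr i)
  choose δf hδf ep em h1 h2 using h
  obtain ⟨δ, hδ, hle⟩ : ∃ δ > (0:ℝ), ∀ i, δ ≤ δf i := by
    rcases isEmpty_or_nonempty (Fin n) with hn | hn
    · exact ⟨1, one_pos, fun i => (hn.elim i)⟩
    · have huniv : (Finset.univ : Finset (Fin n)).Nonempty := Finset.univ_nonempty
      refine ⟨Finset.univ.inf' huniv δf, ?_, fun i => Finset.inf'_le δf (Finset.mem_univ i)⟩
      exact (Finset.lt_inf'_iff huniv).mpr (fun i _ => hδf i)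
  exact ⟨δ, hδ, ep, em,
    fun i t ht ht' => h1 i t ht (lt_of_lt_of_le ht' (hle i)),
    fun i t ht ht' => h2 i t (lt_of_le_of_lt (neg_le_neg (hle i)) ht) ht'⟩

lemma rot_ne_self {x : ℂ} (hx : x ≠ 0) {t : ℝ} (ht : t ≠ 0) (ht' : |t| < 1) :
    rot t x ≠ x := by
  intro h
  have h1 : Complex.exp (t * Complex.I) = 1 := by
    have h2 : Complex.exp (t * Complex.I) * x = 1 * x := by rw [one_mul]; exact h
    exact mul_right_cancel₀ hx h2
  obtain ⟨k, hk⟩ := Complex.exp_eq_one_iff.mp h1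
  have hk2 : (t : ℂ) = (k : ℂ) * (2 * (Real.pi : ℂ)) :=
    mul_right_cancel₀ Complex.I_ne_zero (hk.trans (by ring))
  have ht2 : t = (k : ℝ) * (2 * Real.pi) := by exact_mod_cast hk2
  rcases eq_or_ne k 0 with hk0 | hk0
  · exact ht (by simp [hk0] at ht2; exact ht2)
  · have habs : |t| = |(k:ℝ)| * (2 * Real.pi) := by
      rw [ht2, abs_mul, abs_of_pos (show (0:ℝ) < 2 * Real.pi by positivity)]
    have hk1 : (1:ℝ) ≤ |(k:ℝ)| := by
      have := Int.one_le_abs hk0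
      exact_mod_cast this
    nlinarith [Real.pi_gt_three]

lemma signal_eq_one_iff {m : ℂ} {r : ℝ} {y : ℂ} : signal m r y = 1 ↔ ‖y - m‖ ≤ r := by
  unfold signal; split <;> simp_all


/-- `H_v` is properly u.s.c. iff for all `i ≤ j`, no common boundary
point of the `i`-th and `j`-th signals is an isolated point of the intersection of
their closed disks with `S¹`. -/
theorem stmt7 {n : ℕ} (v : Fin n → ℂ × ℝ) (hr : ∀ i, 0 < (v i).2) :
    ProperlyUSC (Hsum v) ↔
      ∀ i j : Fin n, i ≤ j →
        ∀ x ∈ bTrace (v i).1 (v i).2 ∩ bTrace (v j).1 (v j).2,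
          ¬ ∃ ε > (0 : ℝ),
            ∀ y ∈ {y ∈ S1 | ‖y - (v i).1‖ ≤ (v i).2 ∧ ‖y - (v j).1‖ ≤ (v j).2},
              dist y x < ε → y = x := by
  constructor
  · -- USC → no isolated common boundary point
    intro husc i j hij x hx hiso
    obtain ⟨ε, hε, hiso⟩ := hiso
    obtain ⟨⟨hx1, hxi⟩, ⟨-, hxj⟩⟩ := hx
    have hxS : x ∈ S1 := hx1
    have hx0 : x ≠ 0 := by intro h; rw [h, norm_zero] at hx1; exact one_ne_zero hx1.symm
    obtain ⟨δ, hδ, ep, em, hep, hem⟩ := hsum_sides v hr x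
    obtain ⟨δ1, hδ1, hball⟩ : ∃ δ1 > (0:ℝ), ∀ t : ℝ, |t| < δ1 → dist (rot t x) x < ε := by
      obtain ⟨δ1, hδ1, hb⟩ := Metric.continuousAt_iff.mp (continuous_rot x).continuousAt ε hε
      exact ⟨δ1, hδ1, fun t ht => by
        have h2 := hb (show dist t 0 < δ1 by rwa [Real.dist_eq, sub_zero])
        rwa [rot_zero] at h2⟩
    set δ2 := min δ (min δ1 1) with hδ2def
    have hδ2 : 0 < δ2 := lt_min hδ (lt_min hδ1 one_pos)
    have hδ2δ : δ2 ≤ δ := min_le_left _ _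
    have hδ2δ1 : δ2 ≤ δ1 := le_trans (min_le_right _ _) (min_le_left _ _)
    have hδ21 : δ2 ≤ 1 := le_trans (min_le_right _ _) (min_le_right _ _)
    have hkey : ∀ t : ℝ, t ≠ 0 → |t| < δ2 →
        ¬(‖rot t x - (v i).1‖ ≤ (v i).2 ∧ ‖rot t x - (v j).1‖ ≤ (v j).2) := by
      intro t ht0 htδ hboth
      have h1 : rot t x ∈ S1 := by
        show ‖rot t x‖ = 1; rw [norm_rot, hx1]
      have h2 : dist (rot t x) x < ε := hball t (lt_of_lt_of_le htδ hδ2δ1)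
      have h3 := hiso (rot t x) ⟨h1, hboth⟩ h2
      exact rot_ne_self hx0 ht0 (lt_of_lt_of_le htδ hδ21) h3
    -- not both right values 1, not both left values 1
    have hepor : ep i = 0 ∨ ep j = 0 := by
      have ht1 : (0:ℝ) < δ2/2 := by linarith
      have ht2 : δ2/2 < δ := by linarith [hδ2δ]
      have habs : |δ2/2| < δ2 := by rw [abs_of_pos ht1]; linarith
      have hk := hkey (δ2/2) (ne_of_gt ht1) habs
      by_contra hcon
      push_neg at hcon
      obtain ⟨h1, h2⟩ := hcon
      have e1 : ep i = 1 := by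
        have := hep i (δ2/2) ht1 ht2
        have hle := signal_le_one (v i).1 (v i).2 (rot (δ2/2) x)
        omega
      have e2 : ep j = 1 := by
        have := hep j (δ2/2) ht1 ht2
        have hle := signal_le_one (v j).1 (v j).2 (rot (δ2/2) x)
        omega
      exact hk ⟨signal_eq_one_iff.mp ((hep i (δ2/2) ht1 ht2).trans e1),
        signal_eq_one_iff.mp ((hep j (δ2/2) ht1 ht2).trans e2)⟩
    have hemor : em i = 0 ∨ em j = 0 := by
      have ht1 : -δ < -(δ2/2) := by linarith [hδ2δ]
      have ht2 : -(δ2/2) < 0 := by linarith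
      have habs : |(-(δ2/2))| < δ2 := by rw [abs_neg, abs_of_pos (by linarith)]; linarith
      have hk := hkey (-(δ2/2)) (ne_of_lt ht2) habs
      by_contra hcon
      push_neg at hcon
      obtain ⟨h1, h2⟩ := hcon
      have e1 : em i = 1 := by
        have := hem i (-(δ2/2)) ht1 ht2
        have hle := signal_le_one (v i).1 (v i).2 (rot (-(δ2/2)) x)
        omega
      have e2 : em j = 1 := by
        have := hem j (-(δ2/2)) ht1 ht2
        have hle := signal_le_one (v j).1 (v j).2 (rot (-(δ2/2)) x)
        omega
      exact hk ⟨signal_eq_one_iff.mp ((hem i (-(δ2/2)) ht1 ht2).trans e1),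
        signal_eq_one_iff.mp ((hem j (-(δ2/2)) ht1 ht2).trans e2)⟩
    -- per-index inequalities
    have hlep : ∀ k, ep k ≤ signal (v k).1 (v k).2 x := fun k =>
      sided_le one_ne_zero hδ (fun t ht ht' => by rw [one_mul]; exact hep k t ht ht')
    have hlem : ∀ k, em k ≤ signal (v k).1 (v k).2 x := fun k =>
      sided_le (neg_ne_zero.mpr one_ne_zero) hδ (fun t ht ht' => by
        have : (-1 : ℝ) * t = -t := by ring
        rw [this]
        exact hem k (-t) (by linarith) (by linarith))
    have hsigi : signal (v i).1 (v i).2 x = 1 := signal_eq_one_iff.mpr (le_of_eq hxi)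
    have hsigj : signal (v j).1 (v j).2 x = 1 := signal_eq_one_iff.mpr (le_of_eq hxj)
    -- strict sums
    have hsa : ∑ k, ep k < Hsum v x := by
      unfold Hsum
      apply Finset.sum_lt_sum (fun k _ => hlep k)
      rcases hepor with h | h
      · exact ⟨i, Finset.mem_univ i, by rw [h, hsigi]; omega⟩
      · exact ⟨j, Finset.mem_univ j, by rw [h, hsigj]; omega⟩
    have hsb : ∑ k, em k < Hsum v x := by
      unfold Hsum
      apply Finset.sum_lt_sum (fun k _ => hlem k)
      rcases hemor with h | h
      · exact ⟨i, Finset.mem_univ i, by rw [h, hsigi]; omega⟩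
      · exact ⟨j, Finset.mem_univ j, by rw [h, hsigj]; omega⟩
    -- USC at x
    obtain ⟨a, b, hra, hlb, hmax⟩ := husc x hxS
    have hra' : rightVal (Hsum v) x (∑ k, ep k) :=
      ⟨δ, hδ, fun t ht ht' => Finset.sum_congr rfl (fun k _ => hep k t ht ht')⟩
    have hlb' : leftVal (Hsum v) x (∑ k, em k) :=
      ⟨δ, hδ, fun t ht ht' => Finset.sum_congr rfl (fun k _ => hem k t ht ht')⟩
    have ha : a = ∑ k, ep k := rightVal_unique hra hra'
    have hb : b = ∑ k, em k := leftVal_unique hlb hlb'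
    rw [ha, hb] at hmax
    have : max (∑ k, ep k) (∑ k, em k) < Hsum v x := max_lt hsa hsb
    rw [hmax] at this
    exact lt_irrefl _ this
  · -- no isolated common boundary point → USC
    intro hcond x hxS
    have hx1 : ‖x‖ = 1 := hxS
    have hx0 : x ≠ 0 := by intro h; rw [h, norm_zero] at hx1; exact one_ne_zero hx1.symm
    obtain ⟨δ, hδ, ep, em, hep, hem⟩ := hsum_sides v hr x
    refine ⟨∑ k, ep k, ∑ k, em k,
      ⟨δ, hδ, fun t ht ht' => Finset.sum_congr rfl (fun k _ => hep k t ht ht')⟩,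
      ⟨δ, hδ, fun t ht ht' => Finset.sum_congr rfl (fun k _ => hem k t ht ht')⟩, ?_⟩
    have hlep : ∀ k, ep k ≤ signal (v k).1 (v k).2 x := fun k =>
      sided_le one_ne_zero hδ (fun t ht ht' => by rw [one_mul]; exact hep k t ht ht')
    have hlem : ∀ k, em k ≤ signal (v k).1 (v k).2 x := fun k =>
      sided_le (neg_ne_zero.mpr one_ne_zero) hδ (fun t ht ht' => by
        have h' : (-1 : ℝ) * t = -t := by ring
        rw [h']
        exact hem k (-t) (by linarith) (by linarith))
    have hsa : ∑ k, ep k ≤ Hsum v x := Finset.sum_le_sum (fun k _ => hlep k)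
    have hsb : ∑ k, em k ≤ Hsum v x := Finset.sum_le_sum (fun k _ => hlem k)
    by_contra hne
    have hmaxlt : max (∑ k, ep k) (∑ k, em k) < Hsum v x :=
      lt_of_le_of_ne (max_le hsa hsb) (fun h => hne h.symm)
    have hsa' : ∑ k, ep k < Hsum v x := lt_of_le_of_lt (le_max_left _ _) hmaxlt
    have hsb' : ∑ k, em k < Hsum v x := lt_of_le_of_lt (le_max_right _ _) hmaxlt
    -- extract indices
    obtain ⟨i, hepi, hsigi⟩ : ∃ i, ep i = 0 ∧ signal (v i).1 (v i).2 x = 1 := by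
      by_contra hcon
      push_neg at hcon
      have hall : ∀ k ∈ Finset.univ, signal (v k).1 (v k).2 x ≤ ep k := by
        intro k _
        have h1 := hlep k
        have h2 := signal_le_one (v k).1 (v k).2 x
        rcases Nat.eq_zero_or_pos (ep k) with h | h
        · have := hcon k h
          omega
        · omega
      have := Finset.sum_le_sum hall
      unfold Hsum at hsa'
      omega
    obtain ⟨j, hemj, hsigj⟩ : ∃ j, em j = 0 ∧ signal (v j).1 (v j).2 x = 1 := by
      by_contra hcon
      push_neg at hcon
      have hall : ∀ k ∈ Finset.univ, signal (v k).1 (v k).2 x ≤ em k := by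
        intro k _
        have h1 := hlem k
        have h2 := signal_le_one (v k).1 (v k).2 x
        rcases Nat.eq_zero_or_pos (em k) with h | h
        · have := hcon k h
          omega
        · omega
      have := Finset.sum_le_sum hall
      unfold Hsum at hsb'
      omega
    -- boundary memberships
    have hxi : ‖x - (v i).1‖ = (v i).2 := by
      apply sided_boundary one_ne_zero hδ (fun t ht ht' => ?_) (signal_eq_one_iff.mp hsigi)
      rw [one_mul, hep i t ht ht', hepi]
    have hxj : ‖x - (v j).1‖ = (v j).2 := by
      apply sided_boundary (neg_ne_zero.mpr one_ne_zero) hδ (fun t ht ht' => ?_)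
        (signal_eq_one_iff.mp hsigj)
      have h' : (-1 : ℝ) * t = -t := by ring
      rw [h', hem j (-t) (by linarith) (by linarith), hemj]
    -- isolation witness
    obtain ⟨ε, hε, harg⟩ : ∃ ε > (0:ℝ), ∀ y : ℂ, dist y x < ε → |Complex.arg (y / x)| < min δ 1 := by
      have h1 : ContinuousAt (fun y : ℂ => y / x) x := continuousAt_id.div continuousAt_const hx0
      have h2 : ContinuousAt Complex.arg ((fun y : ℂ => y / x) x) := by
        have : (fun y : ℂ => y / x) x = 1 := div_self hx0
        rw [this]
        exact Complex.continuousAt_arg Complex.one_mem_slitPlane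
      have h3 : ContinuousAt (fun y : ℂ => Complex.arg (y / x)) x := ContinuousAt.comp (g := Complex.arg) (f := fun y : ℂ => y / x) h2 h1
      obtain ⟨ε, hε, hb⟩ := Metric.continuousAt_iff.mp h3 (min δ 1) (lt_min hδ one_pos)
      refine ⟨ε, hε, fun y hy => ?_⟩
      have := hb hy
      rwa [Real.dist_eq, div_self hx0, Complex.arg_one, sub_zero] at this
    have hrotarg : ∀ y : ℂ, ‖y‖ = 1 → rot (Complex.arg (y / x)) x = y := by
      intro y hy
      have hyx : ‖y / x‖ = 1 := by
        rw [norm_div, hy, hx1, div_one]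
      have := Complex.norm_mul_exp_arg_mul_I (y / x)
      rw [hyx, Complex.ofReal_one, one_mul] at this
      show Complex.exp (↑(Complex.arg (y / x)) * Complex.I) * x = y
      rw [this, div_mul_cancel₀ _ hx0]
    -- apply the hypothesis, ordered
    have hmain : ∀ (i' j' : Fin n), i' ≤ j' →
        ‖x - (v i').1‖ = (v i').2 → ‖x - (v j').1‖ = (v j').2 →
        ((∀ t : ℝ, 0 < t → t < δ → signal (v i').1 (v i').2 (rot t x) = 0) ∨
         (∀ t : ℝ, 0 < t → t < δ → signal (v j').1 (v j').2 (rot t x) = 0)) →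
        ((∀ t : ℝ, -δ < t → t < 0 → signal (v i').1 (v i').2 (rot t x) = 0) ∨
         (∀ t : ℝ, -δ < t → t < 0 → signal (v j').1 (v j').2 (rot t x) = 0)) →
        False := by
      intro i' j' hij hbi hbj hright hleft
      apply hcond i' j' hij x ⟨⟨hx1, hbi⟩, ⟨hx1, hbj⟩⟩
      refine ⟨ε, hε, fun y hy hdist => ?_⟩
      obtain ⟨hyS, hyi, hyj⟩ := hy
      have hy1 : ‖y‖ = 1 := hyS
      set t := Complex.arg (y / x) with htdef
      have hteq : rot t x = y := hrotarg y hy1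
      have htsmall : |t| < min δ 1 := harg y hdist
      have htδ : |t| < δ := lt_of_lt_of_le htsmall (min_le_left _ _)
      rcases lt_trichotomy t 0 with htc | htc | htc
      · rcases hleft with hL | hL
        · have := hL t (by rw [abs_lt] at htδ; linarith [htδ.1]) htc
          rw [hteq] at this
          rw [signal_eq_one_iff.mpr hyi] at this
          omega
        · have := hL t (by rw [abs_lt] at htδ; linarith [htδ.1]) htc
          rw [hteq] at this
          rw [signal_eq_one_iff.mpr hyj] at this
          omega
      · rw [← hteq, htc, rot_zero]
      · rcases hright with hR | hR
        · have := hR t htc (by rw [abs_lt] at htδ; linarith [htδ.2])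
          rw [hteq] at this
          rw [signal_eq_one_iff.mpr hyi] at this
          omega
        · have := hR t htc (by rw [abs_lt] at htδ; linarith [htδ.2])
          rw [hteq] at this
          rw [signal_eq_one_iff.mpr hyj] at this
          omega
    have hri : ∀ t : ℝ, 0 < t → t < δ → signal (v i).1 (v i).2 (rot t x) = 0 := by
      intro t ht ht'; rw [hep i t ht ht', hepi]
    have hlj : ∀ t : ℝ, -δ < t → t < 0 → signal (v j).1 (v j).2 (rot t x) = 0 := by
      intro t ht ht'; rw [hem j t ht ht', hemj]
    rcases le_total i j with hij | hij
    · exact hmain i j hij hxi hxj (Or.inl hri) (Or.inr hlj)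
    · exact hmain j i hij hxj hxi (Or.inr hri) (Or.inl hlj)
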